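/- Let J be an arbitrary index type and let a : J × {1,…,n} → ℝ be given coupling coefficients. Say a nonempty subset S ⊆ {1,…,n} admits a decoherence-free sign vector if there exists w : S → {−1,1} with ∑_{i∈S} w_i a_{j,i} = 0 for all j ∈ J. Let m ≥ 1 and suppose that no subset S with 1 ≤ |S| < m admits a decoherence-free sign vector. Then any two distinct sign vectors z, z' : {1,…,n} → {−1,1} satisfying ∑_{i=1}^n z_i a_{j,i} = ∑_{i=1}^n z'_i a_{j,i} for all j ∈ J (i.e., lying in a common affine decoherence-free subspace) have Hamming distance D_H(z,z') ≥ m. -/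
import Mathlib


open Classical in
/-- Paper: Lemma 1 of Section 4.3.1.
Let `a : J × Fin n → ℝ` be coupling coefficients. A nonempty subset
`S ⊆ {1,…,n}` admits a decoherence-free sign vector if there is `w` with values
`±1` on `S` and `∑_{i∈S} w i · a j i = 0` for all `j`. If no subset of size
`1 ≤ |S| < m` admits a decoherence-free sign vector, then any two distinct sign
vectors `z, z'` lying in a common affine decoherence-free subspace (i.e. with
`∑_i z i · a j i = ∑_i z' i · a j i` for all `j`) have Hamming distance ≥ `m`. -/
theorem hammingDist_ge_of_common_affine_dfs
    (n m : ℕ) (hm : 1 ≤ m) {J : Type*} (a : J → Fin n → ℝ)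
    (hmin : ∀ S : Finset (Fin n), 1 ≤ S.card → S.card < m →
      ¬ ∃ w : Fin n → ℝ, (∀ i ∈ S, w i = 1 ∨ w i = -1) ∧
        ∀ j, ∑ i ∈ S, w i * a j i = 0)
    (z z' : Fin n → ℝ)
    (hz : ∀ i, z i = 1 ∨ z i = -1) (hz' : ∀ i, z' i = 1 ∨ z' i = -1)
    (hne : z ≠ z')
    (hcoup : ∀ j, ∑ i, z i * a j i = ∑ i, z' i * a j i) :
    m ≤ (Finset.univ.filter (fun i => z i ≠ z' i)).card := by
  set S := Finset.univ.filter (fun i => z i ≠ z' i) with hS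
  have hcard1 : 1 ≤ S.card := by
    rw [Nat.one_le_iff_ne_zero, Ne, Finset.card_eq_zero]
    intro h
    apply hne
    funext i
    by_contra hi
    have : i ∈ S := by simp [hS, hi]
    simp [h] at this
  by_contra hlt
  push_neg at hlt
  refine hmin S hcard1 hlt ⟨fun i => (z i - z' i) / 2, ?_, ?_⟩
  · intro i hi
    have hi' : z i ≠ z' i := by simpa [hS] using hi
    rcases hz i with h1 | h1 <;> rcases hz' i with h2 | h2 <;>
      simp [h1, h2] at hi' ⊢ <;> norm_num
  · intro j
    have hsplit : ∑ i ∈ S, (z i - z' i) * a j i = ∑ i, (z i - z' i) * a j i := by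
      rw [← Finset.sum_filter_add_sum_filter_not Finset.univ (fun i => z i ≠ z' i)
        (fun i => (z i - z' i) * a j i)]
      have : ∑ i ∈ Finset.univ.filter (fun i => ¬ z i ≠ z' i), (z i - z' i) * a j i = 0 := by
        apply Finset.sum_eq_zero
        intro i hi
        simp only [Finset.mem_filter, not_not] at hi
        rw [hi.2]; ring
      rw [this, add_zero]
    have key : ∑ i, (z i - z' i) * a j i = 0 := by
      have := hcoup j
      simp only [sub_mul, Finset.sum_sub_distrib]
      linarith
    calc ∑ i ∈ S, (z i - z' i) / 2 * a j i
        = (∑ i ∈ S, (z i - z' i) * a j i) / 2 := by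
          rw [Finset.sum_div]; exact Finset.sum_congr rfl (fun i _ => by ring)
      _ = 0 := by rw [hsplit, key]; norm_num
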